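/- arXiv:2106.14326 — 4 statements merged into one kernel-verified Lean document; each statement's English description precedes it below -/
import Mathlib

section
/- (Asymptotic last-iterate convergence of OOMD.) Suppose ψ is 1-strongly convex with respect to the 2-norm and continuously differentiable on the entire domain Z, and η ≤ 1/(8P). Then the OOMD iterates z_t converge, as t → ∞, to some point z_∞ that is a Nash equilibrium (z_∞ ∈ Z*). -/
open Finset Filter Topology

noncomputable section

/-- Squared Euclidean norm on `ℝ^n`. -/
def sqnorm {n : ℕ} (z : Fin n → ℝ) : ℝ := ∑ i, (z i) ^ 2

/-- Euclidean (2-)norm on `ℝ^n`. -/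
def norm2 {n : ℕ} (z : Fin n → ℝ) : ℝ := Real.sqrt (sqnorm z)

/-- 1-norm on `ℝ^n`. -/
def norm1 {n : ℕ} (z : Fin n → ℝ) : ℝ := ∑ i, |z i|

/-- Dot product on `ℝ^n`. -/
def dotp {n : ℕ} (a b : Fin n → ℝ) : ℝ := ∑ i, a i * b i

/-- Treeplexes (Hoda et al.): probability simplexes, Cartesian products, and branching. -/
inductive IsTreeplex : {n : ℕ} → Set (Fin n → ℝ) → Prop
  | simplex (m : ℕ) :
      IsTreeplex {x : Fin (m + 1) → ℝ | (∀ i, 0 ≤ x i) ∧ (∑ i, x i) = 1}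
  | prod {m k : ℕ} {S : Set (Fin m → ℝ)} {T : Set (Fin k → ℝ)} :
      IsTreeplex S → IsTreeplex T →
      IsTreeplex {z : Fin (m + k) → ℝ | ∃ u ∈ S, ∃ v ∈ T, z = Fin.append u v}
  | branch {m k : ℕ} {S : Set (Fin m → ℝ)} {T : Set (Fin k → ℝ)} (i : Fin m) :
      IsTreeplex S → IsTreeplex T →
      IsTreeplex {z : Fin (m + k) → ℝ | ∃ u ∈ S, ∃ v ∈ T,
        z = Fin.append u (fun j => u i * v j)}

/-- A point `z = (x, y)` of the product space `ℝ^M × ℝ^N`. -/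
abbrev Pt (M N : ℕ) := (Fin M → ℝ) × (Fin N → ℝ)

def dotPt {M N : ℕ} (a b : Pt M N) : ℝ := dotp a.1 b.1 + dotp a.2 b.2

def sqnormPt {M N : ℕ} (z : Pt M N) : ℝ := sqnorm z.1 + sqnorm z.2

def norm2Pt {M N : ℕ} (z : Pt M N) : ℝ := Real.sqrt (sqnormPt z)

def norm1Pt {M N : ℕ} (z : Pt M N) : ℝ := norm1 z.1 + norm1 z.2

/-- The game operator `F(z) = (G y, -Gᵀ x)`. -/
def Fop {M N : ℕ} (G : Matrix (Fin M) (Fin N) ℝ) (z : Pt M N) : Pt M N :=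
  (G.mulVec z.2, -(G.transpose.mulVec z.1))

/-- Bregman divergence of `ψ` (via the Fréchet derivative). -/
def Dbreg {M N : ℕ} (ψ : Pt M N → ℝ) (u v : Pt M N) : ℝ :=
  ψ u - ψ v - fderiv ℝ ψ v (u - v)

/-- Bregman divergence on a single space. -/
def Dbreg1 {n : ℕ} (ψ : (Fin n → ℝ) → ℝ) (u v : Fin n → ℝ) : ℝ :=
  ψ u - ψ v - fderiv ℝ ψ v (u - v)

/-- Optimistic online mirror descent with Bregman-divergence function `D`,
step size `η`, iterates `z` and `zh` (the latter is `ẑ`), started from an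
arbitrary `ẑ₁ = z₀ ∈ Z`. -/
def IsOOMD {M N : ℕ} (G : Matrix (Fin M) (Fin N) ℝ) (Z : Set (Pt M N))
    (D : Pt M N → Pt M N → ℝ) (η : ℝ) (z zh : ℕ → Pt M N) : Prop :=
  z 0 ∈ Z ∧ zh 1 = z 0 ∧
  (∀ t : ℕ, 1 ≤ t → z t ∈ Z ∧
    ∀ w ∈ Z, η * dotPt (z t) (Fop G (z (t - 1))) + D (z t) (zh t) ≤
      η * dotPt w (Fop G (z (t - 1))) + D w (zh t)) ∧
  (∀ t : ℕ, 1 ≤ t → zh (t + 1) ∈ Z ∧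
    ∀ w ∈ Z, η * dotPt (zh (t + 1)) (Fop G (z t)) + D (zh (t + 1)) (zh t) ≤
      η * dotPt w (Fop G (z t)) + D w (zh t))

def maxPayoff {M N : ℕ} (G : Matrix (Fin M) (Fin N) ℝ) (Y : Set (Fin N → ℝ))
    (x : Fin M → ℝ) : ℝ :=
  sSup ((fun y => dotp x (G.mulVec y)) '' Y)

def minPayoff {M N : ℕ} (G : Matrix (Fin M) (Fin N) ℝ) (X : Set (Fin M → ℝ))
    (y : Fin N → ℝ) : ℝ :=
  sInf ((fun x => dotp x (G.mulVec y)) '' X)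

/-- `X* = argmin_{x ∈ X} max_{y ∈ Y} xᵀGy`. -/
def Xstar {M N : ℕ} (G : Matrix (Fin M) (Fin N) ℝ) (X : Set (Fin M → ℝ))
    (Y : Set (Fin N → ℝ)) : Set (Fin M → ℝ) :=
  {x ∈ X | ∀ x' ∈ X, maxPayoff G Y x ≤ maxPayoff G Y x'}

/-- `Y* = argmax_{y ∈ Y} min_{x ∈ X} xᵀGy`. -/
def Ystar {M N : ℕ} (G : Matrix (Fin M) (Fin N) ℝ) (X : Set (Fin M → ℝ))
    (Y : Set (Fin N → ℝ)) : Set (Fin N → ℝ) :=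
  {y ∈ Y | ∀ y' ∈ Y, minPayoff G X y' ≤ minPayoff G X y}

/-- The set of Nash equilibria `Z* = X* × Y*`. -/
def NashSet {M N : ℕ} (G : Matrix (Fin M) (Fin N) ℝ) (X : Set (Fin M → ℝ))
    (Y : Set (Fin N → ℝ)) : Set (Pt M N) :=
  (Xstar G X Y) ×ˢ (Ystar G X Y)

/-- Generalized KL divergence (Bregman divergence of the vanilla entropy),
with the convention `0 ln 0 = 0`. -/
def KLgen {n : ℕ} (u v : Fin n → ℝ) : ℝ :=
  ∑ i, (u i * Real.log (u i / v i) - u i + v i)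

def KLgenPt {M N : ℕ} (u v : Pt M N) : ℝ := KLgen u.1 v.1 + KLgen u.2 v.2

/-- The combinatorial structure of a treeplex in sequence form: indices `Fin n`,
information sets `Fin K`, the information set `owner i = h(i)` of each index,
and the parent index `parent h = σ(h)` of each information set (`none` for the
root convention `z_{σ(h)} = 1`), with an acyclicity witness. -/
structure TreeplexData (n K : ℕ) where
  owner : Fin n → Fin K
  parent : Fin K → Option (Fin n)
  rank : Fin K → ℕ
  parent_rank : ∀ (h : Fin K) (j : Fin n), parent h = some j → rank (owner j) < rank h

/-- `z_{σ(h)}`, with the convention that it is `1` when `h` has no parent. -/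
def TreeplexData.parentVal {n K : ℕ} (T : TreeplexData n K) (z : Fin n → ℝ) (h : Fin K) : ℝ :=
  (T.parent h).elim 1 z

/-- The treeplex determined by `T`: `z ≥ 0` with `∑_{i ∈ Ω_h} z_i = z_{σ(h)}`. -/
def TreeplexData.set {n K : ℕ} (T : TreeplexData n K) : Set (Fin n → ℝ) :=
  {z | (∀ i, 0 ≤ z i) ∧
    ∀ h : Fin K, (∑ i ∈ Finset.univ.filter (fun i => T.owner i = h), z i) = T.parentVal z h}

/-- `q_i = z_i / z_{p_i}`. -/
def TreeplexData.q {n K : ℕ} (T : TreeplexData n K) (z : Fin n → ℝ) (i : Fin n) : ℝ :=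
  z i / T.parentVal z (T.owner i)

/-- The dilated entropy `Ψ^dil_α(z) = ∑_i α_{h(i)} z_i ln q_i`. -/
def dilEnt {n K : ℕ} (T : TreeplexData n K) (α : Fin K → ℝ) (z : Fin n → ℝ) : ℝ :=
  ∑ i, α (T.owner i) * z i * Real.log (T.q z i)

/-- Bregman divergence of the dilated entropy:
`D(u, z) = ∑_i α_{h(i)} u_i ln(q^u_i / q^z_i)`, with `0 ln 0 = 0`. -/
def dilEntBreg {n K : ℕ} (T : TreeplexData n K) (α : Fin K → ℝ) (u z : Fin n → ℝ) : ℝ :=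
  ∑ i, α (T.owner i) * u i * Real.log (T.q u i / T.q z i)

/-- Coordinates of a pair `z = (x, y)` indexed by `Fin M ⊕ Fin N`. -/
def coordsOf {M N : ℕ} (z : Pt M N) : Fin M ⊕ Fin N → ℝ := Sum.elim z.1 z.2


section Aux

variable {M N n : ℕ}

lemma dotp_add_left (a b c : Fin n → ℝ) : dotp (a + b) c = dotp a c + dotp b c := by
  simp [dotp, add_mul, Finset.sum_add_distrib]

lemma dotp_smul_left (r : ℝ) (a c : Fin n → ℝ) : dotp (r • a) c = r * dotp a c := by
  simp [dotp, Finset.mul_sum, mul_assoc]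

lemma dotp_zero_left (c : Fin n → ℝ) : dotp 0 c = 0 := by simp [dotp]

lemma dotp_sub_left (a b c : Fin n → ℝ) : dotp (a - b) c = dotp a c - dotp b c := by
  simp [dotp, sub_mul, Finset.sum_sub_distrib]

lemma dotp_comm (a b : Fin n → ℝ) : dotp a b = dotp b a := by
  simp [dotp, mul_comm]

lemma dotPt_add_left (a b c : Pt M N) : dotPt (a + b) c = dotPt a c + dotPt b c := by
  simp [dotPt, dotp_add_left]; ring

lemma dotPt_sub_left (a b c : Pt M N) : dotPt (a - b) c = dotPt a c - dotPt b c := by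
  simp [dotPt, dotp_sub_left]; ring

lemma dotPt_smul_left (r : ℝ) (a c : Pt M N) : dotPt (r • a) c = r * dotPt a c := by
  simp [dotPt, dotp_smul_left]; ring

lemma dotPt_zero_left (c : Pt M N) : dotPt 0 c = 0 := by
  simp [dotPt, dotp_zero_left]

lemma dotPt_sum_left {α : Type*} (s : Finset α) (f : α → Pt M N) (c : Pt M N) :
    dotPt (∑ t ∈ s, f t) c = ∑ t ∈ s, dotPt (f t) c := by
  induction s using Finset.cons_induction with
  | empty => simp [dotPt_zero_left]
  | cons a s ha ih => simp [Finset.sum_cons, dotPt_add_left, ih]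

lemma dotp_mulVec_transpose (G : Matrix (Fin M) (Fin N) ℝ) (x : Fin M → ℝ) (y : Fin N → ℝ) :
    dotp y (G.transpose.mulVec x) = dotp x (G.mulVec y) := by
  simp only [dotp, Matrix.mulVec, dotProduct, Matrix.transpose_apply,
    Finset.mul_sum]
  rw [Finset.sum_comm]
  exact Finset.sum_congr rfl fun i _ => Finset.sum_congr rfl fun j _ => by ring

/-- Skew symmetry. -/
lemma dotPt_Fop_skew (G : Matrix (Fin M) (Fin N) ℝ) (a b : Pt M N) :
    dotPt a (Fop G b) = - dotPt b (Fop G a) := by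
  simp only [dotPt, Fop]
  have h1 := dotp_mulVec_transpose G b.1 a.2
  have h2 := dotp_mulVec_transpose G a.1 b.2
  simp only [dotp, Pi.neg_apply, mul_neg] at *
  simp only [Finset.sum_neg_distrib]
  linarith

lemma dotPt_Fop_self (G : Matrix (Fin M) (Fin N) ℝ) (a : Pt M N) :
    dotPt a (Fop G a) = 0 := by
  have := dotPt_Fop_skew G a a; linarith

lemma Fop_sub (G : Matrix (Fin M) (Fin N) ℝ) (a b : Pt M N) :
    Fop G (a - b) = Fop G a - Fop G b := by
  simp [Fop, Matrix.mulVec_sub, Prod.ext_iff]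
  abel

lemma Fop_add (G : Matrix (Fin M) (Fin N) ℝ) (a b : Pt M N) :
    Fop G (a + b) = Fop G a + Fop G b := by
  simp [Fop, Matrix.mulVec_add, Prod.ext_iff]
  abel

end Aux
section Aux2

variable {M N n : ℕ}

lemma sqnorm_nonneg (x : Fin n → ℝ) : 0 ≤ sqnorm x :=
  Finset.sum_nonneg fun i _ => sq_nonneg _

lemma sqnormPt_nonneg (z : Pt M N) : 0 ≤ sqnormPt z :=
  add_nonneg (sqnorm_nonneg _) (sqnorm_nonneg _)

lemma sqnorm_zero : sqnorm (0 : Fin n → ℝ) = 0 := by simp [sqnorm]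

lemma sqnormPt_zero : sqnormPt (0 : Pt M N) = 0 := by
  simp [sqnormPt, sqnorm]

lemma sqnorm_neg (x : Fin n → ℝ) : sqnorm (-x) = sqnorm x := by
  simp [sqnorm]

lemma sqnormPt_neg (z : Pt M N) : sqnormPt (-z) = sqnormPt z := by
  simp [sqnormPt, sqnorm]

lemma sqnormPt_sub_comm (a b : Pt M N) : sqnormPt (a - b) = sqnormPt (b - a) := by
  rw [← sqnormPt_neg (a - b), neg_sub]

lemma sqnorm_add_le (x y : Fin n → ℝ) : sqnorm (x + y) ≤ 2 * sqnorm x + 2 * sqnorm y := by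
  have : ∀ i ∈ Finset.univ, ((x + y) i) ^ 2 ≤ 2 * (x i) ^ 2 + 2 * (y i) ^ 2 := by
    intro i _
    simp only [Pi.add_apply]
    nlinarith [sq_nonneg (x i - y i)]
  calc sqnorm (x + y) ≤ ∑ i, (2 * (x i) ^ 2 + 2 * (y i) ^ 2) := Finset.sum_le_sum this
    _ = 2 * sqnorm x + 2 * sqnorm y := by
        simp [sqnorm, Finset.sum_add_distrib, Finset.mul_sum]

lemma sqnormPt_add_le (a b : Pt M N) :
    sqnormPt (a + b) ≤ 2 * sqnormPt a + 2 * sqnormPt b := by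
  have h1 := sqnorm_add_le a.1 b.1
  have h2 := sqnorm_add_le a.2 b.2
  simp only [sqnormPt, Prod.fst_add, Prod.snd_add] at *
  linarith

/-- `(∑ |x i|)² ≤ n ∑ x i²`. -/
lemma sq_norm1_le (x : Fin n → ℝ) : (norm1 x) ^ 2 ≤ (n : ℝ) * sqnorm x := by
  have h := sq_sum_le_card_mul_sum_sq (s := (Finset.univ : Finset (Fin n)))
    (f := fun i => |x i|)
  simpa [norm1, sqnorm, sq_abs] using h

lemma abs_dotp_le (x y : Fin n → ℝ) : |dotp x y| ≤ ∑ i, |x i| * |y i| := by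
  refine (Finset.abs_sum_le_sum_abs _ _).trans (le_of_eq ?_)
  simp [abs_mul]

lemma abs_dotp_mulVec_le (G : Matrix (Fin M) (Fin N) ℝ) (hG : ∀ i j, |G i j| ≤ 1)
    (x : Fin M → ℝ) (y : Fin N → ℝ) :
    |dotp x (G.mulVec y)| ≤ norm1 x * norm1 y := by
  refine (abs_dotp_le _ _).trans ?_
  have hbd : ∀ i, |(G.mulVec y) i| ≤ norm1 y := by
    intro i
    simp only [Matrix.mulVec, dotProduct]
    refine (Finset.abs_sum_le_sum_abs _ _).trans ?_
    refine Finset.sum_le_sum fun j _ => ?_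
    rw [abs_mul]
    calc |G i j| * |y j| ≤ 1 * |y j| := by
          have := hG i j; have := abs_nonneg (y j); nlinarith
      _ = |y j| := one_mul _
  calc ∑ i, |x i| * |(G.mulVec y) i| ≤ ∑ i, |x i| * norm1 y :=
        Finset.sum_le_sum fun i _ => mul_le_mul_of_nonneg_left (hbd i) (abs_nonneg _)
    _ = norm1 x * norm1 y := by simp [norm1, Finset.sum_mul]

/-- Main skew bound. -/
lemma abs_dotPt_Fop_le (G : Matrix (Fin M) (Fin N) ℝ) (hG : ∀ i j, |G i j| ≤ 1)
    (a b : Pt M N) :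
    |dotPt a (Fop G b)| ≤ (((M : ℝ) + N) / 2) * (sqnormPt a + sqnormPt b) := by
  have h1 : |dotp a.1 (G.mulVec b.2)| ≤ norm1 a.1 * norm1 b.2 :=
    abs_dotp_mulVec_le G hG a.1 b.2
  have h2 : |dotp a.2 (G.transpose.mulVec b.1)| ≤ norm1 b.1 * norm1 a.2 := by
    rw [dotp_mulVec_transpose]
    exact abs_dotp_mulVec_le G hG b.1 a.2
  have key : |dotPt a (Fop G b)|
      ≤ norm1 a.1 * norm1 b.2 + norm1 b.1 * norm1 a.2 := by
    have : dotPt a (Fop G b) = dotp a.1 (G.mulVec b.2) - dotp a.2 (G.transpose.mulVec b.1) := by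
      simp [dotPt, Fop, dotp, mul_neg, Finset.sum_neg_distrib, sub_eq_add_neg]
    rw [this]
    calc |dotp a.1 (G.mulVec b.2) - dotp a.2 (G.transpose.mulVec b.1)|
        ≤ |dotp a.1 (G.mulVec b.2)| + |dotp a.2 (G.transpose.mulVec b.1)| := abs_sub _ _
      _ ≤ _ := add_le_add h1 h2
  refine key.trans ?_
  have e1 : norm1 a.1 * norm1 b.2 ≤ ((norm1 a.1) ^ 2 + (norm1 b.2) ^ 2) / 2 := by
    nlinarith [sq_nonneg (norm1 a.1 - norm1 b.2)]
  have e2 : norm1 b.1 * norm1 a.2 ≤ ((norm1 b.1) ^ 2 + (norm1 a.2) ^ 2) / 2 := by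
    nlinarith [sq_nonneg (norm1 b.1 - norm1 a.2)]
  have q1 := sq_norm1_le a.1
  have q2 := sq_norm1_le a.2
  have q3 := sq_norm1_le b.1
  have q4 := sq_norm1_le b.2
  have hM : (0:ℝ) ≤ M := Nat.cast_nonneg M
  have hN : (0:ℝ) ≤ N := Nat.cast_nonneg N
  have s1 := sqnorm_nonneg a.1
  have s2 := sqnorm_nonneg a.2
  have s3 := sqnorm_nonneg b.1
  have s4 := sqnorm_nonneg b.2
  simp only [sqnormPt]
  nlinarith [mul_le_mul_of_nonneg_left s1 hN, mul_le_mul_of_nonneg_left s2 hM,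
    mul_le_mul_of_nonneg_left s3 hN, mul_le_mul_of_nonneg_left s4 hM]

end Aux2
section Aux3

variable {M N n : ℕ}

lemma sq_le_sqnorm (x : Fin n → ℝ) (i : Fin n) : (x i) ^ 2 ≤ sqnorm x :=
  Finset.single_le_sum (fun j _ => sq_nonneg (x j)) (Finset.mem_univ i)

lemma norm_le_sqrt_sqnormPt (z : Pt M N) : ‖z‖ ≤ Real.sqrt (sqnormPt z) := by
  have h0 : 0 ≤ Real.sqrt (sqnormPt z) := Real.sqrt_nonneg _
  rw [Prod.norm_def]
  refine max_le ?_ ?_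
  · rw [pi_norm_le_iff_of_nonneg h0]
    intro i
    rw [Real.norm_eq_abs, ← Real.sqrt_sq_eq_abs]
    apply Real.sqrt_le_sqrt
    exact (sq_le_sqnorm z.1 i).trans (le_add_of_nonneg_right (sqnorm_nonneg z.2))
  · rw [pi_norm_le_iff_of_nonneg h0]
    intro i
    rw [Real.norm_eq_abs, ← Real.sqrt_sq_eq_abs]
    apply Real.sqrt_le_sqrt
    exact (sq_le_sqnorm z.2 i).trans (le_add_of_nonneg_left (sqnorm_nonneg z.1))

lemma tendsto_of_sqnormPt {f : ℕ → Pt M N} {L : Pt M N}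
    (h : Tendsto (fun k => sqnormPt (f k - L)) atTop (𝓝 0)) :
    Tendsto f atTop (𝓝 L) := by
  rw [tendsto_iff_norm_sub_tendsto_zero]
  have hs : Tendsto (fun k => Real.sqrt (sqnormPt (f k - L))) atTop (𝓝 0) := by
    have := (Real.continuous_sqrt.tendsto 0).comp h
    simpa [Function.comp_def] using this
  exact squeeze_zero (fun k => norm_nonneg _) (fun k => norm_le_sqrt_sqnormPt _) hs

lemma continuous_dotPt : Continuous fun p : Pt M N × Pt M N => dotPt p.1 p.2 := by
  unfold dotPt dotp
  apply Continuous.add <;>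
  · apply continuous_finset_sum
    intro i _
    apply Continuous.mul
    · first
        | exact (continuous_apply i).comp (continuous_fst.fst)
        | exact (continuous_apply i).comp (continuous_fst.snd)
    · first
        | exact (continuous_apply i).comp (continuous_snd.fst)
        | exact (continuous_apply i).comp (continuous_snd.snd)

lemma continuous_mulVec (G : Matrix (Fin M) (Fin N) ℝ) :
    Continuous fun y : Fin N → ℝ => G.mulVec y := by
  refine continuous_pi fun i => ?_
  simp only [Matrix.mulVec, dotProduct]
  exact continuous_finset_sum _ fun j _ => continuous_const.mul (continuous_apply j)

lemma continuous_Fop (G : Matrix (Fin M) (Fin N) ℝ) :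
    Continuous fun z : Pt M N => Fop G z := by
  unfold Fop
  exact ((continuous_mulVec G).comp continuous_snd).prodMk
    (((continuous_mulVec G.transpose).comp continuous_fst).neg)

lemma tendsto_clm_apply' {f : ℕ → (Pt M N →L[ℝ] ℝ)} {g : ℕ → Pt M N}
    {L : Pt M N →L[ℝ] ℝ} {x : Pt M N}
    (hf : Tendsto f atTop (𝓝 L)) (hg : Tendsto g atTop (𝓝 x)) :
    Tendsto (fun k => f k (g k)) atTop (𝓝 (L x)) := by
  have h : Continuous fun p : (Pt M N →L[ℝ] ℝ) × Pt M N => p.1 p.2 :=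
    isBoundedBilinearMap_apply.continuous
  exact (h.tendsto (L, x)).comp (hf.prodMk_nhds hg)

lemma tendsto_dotPt {M N : ℕ} {α : Type*} {l : Filter α} {f g : α → Pt M N} {x y : Pt M N}
    (hf : Tendsto f l (𝓝 x)) (hg : Tendsto g l (𝓝 y)) :
    Tendsto (fun k => dotPt (f k) (g k)) l (𝓝 (dotPt x y)) := by
  simp only [dotPt, dotp]
  have c1 : ∀ i : Fin M, Tendsto (fun k => (f k).1 i) l (𝓝 (x.1 i)) :=
    fun i => (((continuous_apply i).comp continuous_fst).tendsto x).comp hf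
  have c2 : ∀ i : Fin N, Tendsto (fun k => (f k).2 i) l (𝓝 (x.2 i)) :=
    fun i => (((continuous_apply i).comp continuous_snd).tendsto x).comp hf
  have d1 : ∀ i : Fin M, Tendsto (fun k => (g k).1 i) l (𝓝 (y.1 i)) :=
    fun i => (((continuous_apply i).comp continuous_fst).tendsto y).comp hg
  have d2 : ∀ i : Fin N, Tendsto (fun k => (g k).2 i) l (𝓝 (y.2 i)) :=
    fun i => (((continuous_apply i).comp continuous_snd).tendsto y).comp hg
  exact (tendsto_finset_sum _ fun i _ => (c1 i).mul (d1 i)).add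
    (tendsto_finset_sum _ fun i _ => (c2 i).mul (d2 i))

end Aux3
section Aux4

lemma continuous_append2 {m k : ℕ} :
    Continuous fun p : (Fin m → ℝ) × (Fin k → ℝ) => Fin.append p.1 p.2 := by
  refine continuous_pi fun i => ?_
  refine Fin.addCases (fun j => ?_) (fun j => ?_) i
  · simp only [Fin.append_left]
    exact (continuous_apply j).comp continuous_fst
  · simp only [Fin.append_right]
    exact (continuous_apply j).comp continuous_snd

lemma continuous_append_branch {m k : ℕ} (i : Fin m) :
    Continuous fun p : (Fin m → ℝ) × (Fin k → ℝ) =>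
      Fin.append p.1 (fun j => p.1 i * p.2 j) := by
  refine continuous_pi fun i0 => ?_
  refine Fin.addCases (fun j => ?_) (fun j => ?_) i0
  · simp only [Fin.append_left]
    exact (continuous_apply j).comp continuous_fst
  · simp only [Fin.append_right]
    exact ((continuous_apply i).comp continuous_fst).mul
      ((continuous_apply j).comp continuous_snd)

lemma append_linear {m k : ℕ} :
    IsLinearMap ℝ fun p : (Fin m → ℝ) × (Fin k → ℝ) => Fin.append p.1 p.2 := by
  constructor
  · intro p q
    funext i0
    refine Fin.addCases (fun j => ?_) (fun j => ?_) i0 <;>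
      simp [Fin.append_left, Fin.append_right]
  · intro c p
    funext i0
    refine Fin.addCases (fun j => ?_) (fun j => ?_) i0 <;>
      simp [Fin.append_left, Fin.append_right]

lemma IsTreeplex.props {n : ℕ} {S : Set (Fin n → ℝ)} (h : IsTreeplex S) :
    S.Nonempty ∧ Convex ℝ S ∧ IsCompact S ∧ ∀ z ∈ S, ∀ i, 0 ≤ z i := by
  induction h with
  | simplex m =>
    have hset : {x : Fin (m + 1) → ℝ | (∀ i, 0 ≤ x i) ∧ (∑ i, x i) = 1}
        = stdSimplex ℝ (Fin (m + 1)) := rfl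
    refine ⟨⟨fun _ => ((m : ℝ) + 1)⁻¹, fun i => by positivity, ?_⟩, ?_, ?_, ?_⟩
    · simp only [Finset.sum_const, Finset.card_univ, Fintype.card_fin, nsmul_eq_mul]
      push_cast
      field_simp
    · rw [hset]; exact convex_stdSimplex ℝ _
    · rw [hset]; exact isCompact_stdSimplex ℝ _
    · exact fun z hz i => hz.1 i
  | prod hS hT ihS ihT =>
    obtain ⟨⟨zS, hzS⟩, hconvS, hcompS, hnnS⟩ := ihS
    obtain ⟨⟨zT, hzT⟩, hconvT, hcompT, hnnT⟩ := ihT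
    rename_i m k S' T'
    have hset : {z : Fin (m + k) → ℝ | ∃ u ∈ S', ∃ v ∈ T', z = Fin.append u v}
        = (fun p : (Fin m → ℝ) × (Fin k → ℝ) => Fin.append p.1 p.2) '' (S' ×ˢ T') := by
      ext z
      constructor
      · rintro ⟨u, hu, v, hv, rfl⟩; exact ⟨(u, v), ⟨hu, hv⟩, rfl⟩
      · rintro ⟨⟨u, v⟩, ⟨hu, hv⟩, rfl⟩; exact ⟨u, hu, v, hv, rfl⟩
    refine ⟨⟨Fin.append zS zT, zS, hzS, zT, hzT, rfl⟩, ?_, ?_, ?_⟩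
    · rw [hset]
      exact (hconvS.prod hconvT).is_linear_image append_linear
    · rw [hset]
      exact (hcompS.prod hcompT).image continuous_append2
    · rintro z ⟨u, hu, v, hv, rfl⟩ i0
      refine Fin.addCases (fun j => ?_) (fun j => ?_) i0
      · simpa [Fin.append_left] using hnnS u hu j
      · simpa [Fin.append_right] using hnnT v hv j
  | branch i hS hT ihS ihT =>
    obtain ⟨⟨zS, hzS⟩, hconvS, hcompS, hnnS⟩ := ihS
    obtain ⟨⟨zT, hzT⟩, hconvT, hcompT, hnnT⟩ := ihT
    rename_i m k S' T'
    have hset : {z : Fin (m + k) → ℝ | ∃ u ∈ S', ∃ v ∈ T',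
          z = Fin.append u (fun j => u i * v j)}
        = (fun p : (Fin m → ℝ) × (Fin k → ℝ) =>
            Fin.append p.1 (fun j => p.1 i * p.2 j)) '' (S' ×ˢ T') := by
      ext z
      constructor
      · rintro ⟨u, hu, v, hv, rfl⟩; exact ⟨(u, v), ⟨hu, hv⟩, rfl⟩
      · rintro ⟨⟨u, v⟩, ⟨hu, hv⟩, rfl⟩; exact ⟨u, hu, v, hv, rfl⟩
    refine ⟨⟨_, zS, hzS, zT, hzT, rfl⟩, ?_, ?_, ?_⟩
    · -- convexity
      rintro z ⟨u, hu, v, hv, rfl⟩ z' ⟨u', hu', v', hv', rfl⟩ lam mu hlam hmu hsum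
      have hwS : lam • u + mu • u' ∈ S' := hconvS hu hu' hlam hmu hsum
      have hui : 0 ≤ u i := hnnS u hu i
      have hui' : 0 ≤ u' i := hnnS u' hu' i
      have hc1 : 0 ≤ lam * u i := mul_nonneg hlam hui
      have hc2 : 0 ≤ mu * u' i := mul_nonneg hmu hui'
      have hwi : (lam • u + mu • u') i = lam * u i + mu * u' i := by
        simp [smul_eq_mul]
      by_cases hs : lam * u i + mu * u' i = 0
      · have h1 : lam * u i = 0 := by linarith
        have h2 : mu * u' i = 0 := by linarith
        refine ⟨lam • u + mu • u', hwS, zT, hzT, ?_⟩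
        funext i0
        refine Fin.addCases (fun j => ?_) (fun j => ?_) i0
        · simp [Fin.append_left, smul_eq_mul]
        · simp only [Pi.add_apply, Pi.smul_apply, smul_eq_mul, Fin.append_right, hwi]
          rw [hs]
          have e1 : lam * (u i * v j) = 0 := by rw [← mul_assoc, h1, zero_mul]
          have e2 : mu * (u' i * v' j) = 0 := by rw [← mul_assoc, h2, zero_mul]
          rw [e1, e2, zero_mul, add_zero]
      · have hspos : 0 < lam * u i + mu * u' i := lt_of_le_of_ne (by linarith) (Ne.symm hs)
        set s := lam * u i + mu * u' i with hsdef
        have hvT : (lam * u i / s) • v + (mu * u' i / s) • v' ∈ T' := by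
          refine hconvT hv hv' (by positivity) (by positivity) ?_
          field_simp
          exact hsdef.symm
        refine ⟨lam • u + mu • u', hwS, _, hvT, ?_⟩
        funext i0
        refine Fin.addCases (fun j => ?_) (fun j => ?_) i0
        · simp [Fin.append_left, smul_eq_mul]
        · simp only [Pi.add_apply, Pi.smul_apply, smul_eq_mul, Fin.append_right, hwi]
          field_simp
    · rw [hset]
      exact (hcompS.prod hcompT).image (continuous_append_branch i)
    · rintro z ⟨u, hu, v, hv, rfl⟩ i0
      refine Fin.addCases (fun j => ?_) (fun j => ?_) i0
      · simpa [Fin.append_left] using hnnS u hu j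
      · simp only [Fin.append_right]
        exact mul_nonneg (hnnS u hu i) (hnnT v hv j)

end Aux4
section Aux5

lemma three_point {M N : ℕ} (ψ : Pt M N → ℝ) (u v w : Pt M N) :
    Dbreg ψ w v - Dbreg ψ w u - Dbreg ψ u v
      = fderiv ℝ ψ u (w - u) - fderiv ℝ ψ v (w - u) := by
  simp only [Dbreg, map_sub]
  ring

lemma foc_of_min {M N : ℕ} {Z : Set (Pt M N)} (hZ : Convex ℝ Z) {ψ : Pt M N → ℝ}
    {p : Pt M N} (hp : p ∈ Z) (hdp : DifferentiableAt ℝ ψ p)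
    (F : Pt M N) (η : ℝ) (L : Pt M N →L[ℝ] ℝ)
    (hmin : ∀ w ∈ Z, η * dotPt p F + ψ p - L p ≤ η * dotPt w F + ψ w - L w)
    {w : Pt M N} (hw : w ∈ Z) :
    0 ≤ η * dotPt (w - p) F + fderiv ℝ ψ p (w - p) - L (w - p) := by
  set d := w - p with hd
  set φ : ℝ → ℝ := fun s => ψ (p + s • d) with hφ
  have hderiv : HasDerivAt φ (fderiv ℝ ψ p d) 0 := by
    have haff : HasDerivAt (fun s : ℝ => p + s • d) d 0 := by
      simpa using ((hasDerivAt_id (0 : ℝ)).smul_const d).const_add p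
    have hψ' : HasFDerivAt ψ (fderiv ℝ ψ p) (p + (0 : ℝ) • d) := by
      simpa using hdp.hasFDerivAt
    exact hψ'.comp_hasDerivAt 0 haff
  have hslope : Tendsto (slope φ 0) (𝓝[>] (0 : ℝ)) (𝓝 (fderiv ℝ ψ p d)) :=
    (hasDerivAt_iff_tendsto_slope.mp hderiv).mono_left
      (nhdsWithin_mono 0 fun x hx => ne_of_gt hx)
  have hev : ∀ᶠ s in 𝓝[>] (0 : ℝ), L d - η * dotPt d F ≤ slope φ 0 s := by
    filter_upwards [Ioc_mem_nhdsGT_of_mem (Set.mem_Ico.mpr ⟨le_refl 0, zero_lt_one⟩)]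
      with s hs
    have hs0 : 0 < s := hs.1
    have hmem : p + s • d ∈ Z := by
      have heq : p + s • d = (1 - s) • p + s • w := by
        rw [hd, sub_smul, one_smul, smul_sub]
        abel
      rw [heq]
      exact hZ hp hw (by linarith [hs.2]) (le_of_lt hs0) (by ring)
    have h1 := hmin _ hmem
    have h2 : dotPt (p + s • d) F = dotPt p F + s * dotPt d F := by
      rw [dotPt_add_left, dotPt_smul_left]
    have h3 : L (p + s • d) = L p + s * L d := by
      rw [map_add, map_smul]
      simp
    have h4 : s * (L d - η * dotPt d F) ≤ ψ (p + s • d) - ψ p := by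
      rw [h2, h3] at h1
      nlinarith
    have h5 : slope φ 0 s = (ψ (p + s • d) - ψ p) / s := by
      simp [slope, hφ, inv_mul_eq_div]
    rw [h5, le_div_iff₀ hs0]
    linarith [h4]
  have hfinal : L d - η * dotPt d F ≤ fderiv ℝ ψ p d := ge_of_tendsto hslope hev
  linarith

end Aux5
section Aux6

variable {M N n : ℕ}

lemma dotp_neg_right (a b : Fin n → ℝ) : dotp a (-b) = -dotp a b := by
  simp [dotp, mul_neg, Finset.sum_neg_distrib]

lemma dotp_add_right (a b c : Fin n → ℝ) : dotp a (b + c) = dotp a b + dotp a c := by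
  simp [dotp, mul_add, Finset.sum_add_distrib]

lemma dotPt_add_right (a b c : Pt M N) : dotPt a (b + c) = dotPt a b + dotPt a c := by
  simp [dotPt, dotp_add_right]; ring

lemma dotPt_sub_right (a b c : Pt M N) : dotPt a (b - c) = dotPt a b - dotPt a c := by
  have h := dotPt_add_right a (b - c) c
  simp only [sub_add_cancel] at h
  linarith

lemma continuous_dotp_mulVec (G : Matrix (Fin M) (Fin N) ℝ) (x : Fin M → ℝ) :
    Continuous fun y : Fin N → ℝ => dotp x (G.mulVec y) := by
  unfold dotp
  apply continuous_finset_sum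
  intro i _
  exact continuous_const.mul ((continuous_apply i).comp (continuous_mulVec G))

lemma continuous_dotp_left (v : Fin n → ℝ) :
    Continuous fun x : Fin n → ℝ => dotp x v := by
  unfold dotp
  apply continuous_finset_sum
  intro i _
  exact (continuous_apply i).mul continuous_const

lemma Dbreg_self (ψ : Pt M N → ℝ) (u : Pt M N) : Dbreg ψ u u = 0 := by
  simp [Dbreg]

end Aux6
section Aux7

lemma min_normalize {M N : ℕ} {ψ : Pt M N → ℝ} {v p w : Pt M N} {F : Pt M N} {η : ℝ}
    (h : η * dotPt p F + Dbreg ψ p v ≤ η * dotPt w F + Dbreg ψ w v) :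
    η * dotPt p F + ψ p - (fderiv ℝ ψ v) p ≤ η * dotPt w F + ψ w - (fderiv ℝ ψ v) w := by
  simp only [Dbreg, map_sub] at h
  linarith

end Aux7
/-- Theorem 4: for OOMD with a regularizer that is 1-strongly convex
w.r.t. the 2-norm and continuously differentiable on the entire domain `Z = X × Y`,
with `η ≤ 1/(8P)`, the iterates `z_t` converge to a Nash equilibrium. -/
theorem oomd_last_iterate_convergence {M N : ℕ}
    (G : Matrix (Fin M) (Fin N) ℝ) (hG : ∀ i j, |G i j| ≤ 1)
    (X : Set (Fin M → ℝ)) (Y : Set (Fin N → ℝ))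
    (hX : IsTreeplex X) (hY : IsTreeplex Y)
    (ψ : Pt M N → ℝ)
    (hdiff : ∀ v ∈ X ×ˢ Y, DifferentiableAt ℝ ψ v)
    (hcont : ContinuousOn (fun v => fderiv ℝ ψ v) (X ×ˢ Y))
    (hsc : ∀ u ∈ X ×ˢ Y, ∀ v ∈ X ×ˢ Y, (1 / 2) * sqnormPt (u - v) ≤ Dbreg ψ u v)
    (η : ℝ) (hη : 0 < η) (hηP : η ≤ 1 / (8 * ((M : ℝ) + N)))
    (z zh : ℕ → Pt M N) (hoomd : IsOOMD G (X ×ˢ Y) (Dbreg ψ) η z zh) :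
    ∃ zinf ∈ NashSet G X Y, Tendsto z atTop (𝓝 zinf) := by
  obtain ⟨hXne, hXconv, hXcomp, -⟩ := hX.props
  obtain ⟨hYne, hYconv, hYcomp, -⟩ := hY.props
  set Z := X ×ˢ Y with hZdef
  have hZconv : Convex ℝ Z := hXconv.prod hYconv
  have hZcomp : IsCompact Z := hXcomp.prod hYcomp
  have hZne : Z.Nonempty := hXne.prod hYne
  obtain ⟨hz0, hzh1, hz, hzh⟩ := hoomd
  have hzmem : ∀ t, 1 ≤ t → z t ∈ Z := fun t ht => (hz t ht).1
  have hzhmem : ∀ t, 1 ≤ t → zh t ∈ Z := by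
    intro t ht
    match t, ht with
    | 1, _ => rw [hzh1]; exact hz0
    | (t + 2), _ => exact (hzh (t + 1) (by omega)).1
  -- step size bound
  have hKnn : (0:ℝ) ≤ (M : ℝ) + N := by positivity
  have hKpos : 0 < (M : ℝ) + N := by
    rcases eq_or_lt_of_le hKnn with h | h
    · exfalso
      rw [← h] at hηP
      simp at hηP
      linarith
    · exact h
  have hηK : η * ((M : ℝ) + N) ≤ 1 / 8 := by
    have h8 : (0:ℝ) < 8 * ((M : ℝ) + N) := by linarith
    have h9 := (le_div_iff₀ h8).mp hηP
    have h10 : η * (8 * ((M : ℝ) + N)) = 8 * (η * ((M : ℝ) + N)) := by ring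
    linarith
  -- nonnegativity of the Bregman divergence on Z
  have hD_nonneg : ∀ u ∈ Z, ∀ v ∈ Z, 0 ≤ Dbreg ψ u v := by
    intro u hu v hv
    have h := hsc u hu v hv
    have h2 := sqnormPt_nonneg (u - v)
    linarith
  -- the first-order conditions
  have hfoc1 : ∀ t, 1 ≤ t → ∀ w ∈ Z,
      η * dotPt (z t - w) (Fop G (z (t - 1)))
        ≤ Dbreg ψ w (zh t) - Dbreg ψ w (z t) - Dbreg ψ (z t) (zh t) := by
    intro t ht w hw
    have hmin : ∀ w' ∈ Z, η * dotPt (z t) (Fop G (z (t - 1))) + ψ (z t)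
          - (fderiv ℝ ψ (zh t)) (z t)
        ≤ η * dotPt w' (Fop G (z (t - 1))) + ψ w' - (fderiv ℝ ψ (zh t)) w' :=
      fun w' hw' => min_normalize ((hz t ht).2 w' hw')
    have h := foc_of_min hZconv (hzmem t ht) (hdiff _ (hzmem t ht))
      (Fop G (z (t - 1))) η (fderiv ℝ ψ (zh t)) hmin hw
    have h3 := three_point ψ (z t) (zh t) w
    have hed : dotPt (z t - w) (Fop G (z (t - 1)))
        = - dotPt (w - z t) (Fop G (z (t - 1))) := by
      rw [dotPt_sub_left, dotPt_sub_left]; ring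
    rw [hed, mul_neg]
    linarith
  have hfoc2 : ∀ t, 1 ≤ t → ∀ w ∈ Z,
      η * dotPt (zh (t + 1) - w) (Fop G (z t))
        ≤ Dbreg ψ w (zh t) - Dbreg ψ w (zh (t + 1)) - Dbreg ψ (zh (t + 1)) (zh t) := by
    intro t ht w hw
    have hqmem : zh (t + 1) ∈ Z := (hzh t ht).1
    have hmin : ∀ w' ∈ Z, η * dotPt (zh (t + 1)) (Fop G (z t)) + ψ (zh (t + 1))
          - (fderiv ℝ ψ (zh t)) (zh (t + 1))
        ≤ η * dotPt w' (Fop G (z t)) + ψ w' - (fderiv ℝ ψ (zh t)) w' :=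
      fun w' hw' => min_normalize ((hzh t ht).2 w' hw')
    have h := foc_of_min hZconv hqmem (hdiff _ hqmem)
      (Fop G (z t)) η (fderiv ℝ ψ (zh t)) hmin hw
    have h3 := three_point ψ (zh (t + 1)) (zh t) w
    have hed : dotPt (zh (t + 1) - w) (Fop G (z t))
        = - dotPt (w - zh (t + 1)) (Fop G (z t)) := by
      rw [dotPt_sub_left, dotPt_sub_left]; ring
    rw [hed, mul_neg]
    linarith
  -- distance quantities
  set a : ℕ → ℝ := fun t => sqnormPt (zh t - z (t - 1)) with ha
  set b : ℕ → ℝ := fun t => sqnormPt (z t - zh t) with hb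
  have ha_nonneg : ∀ t, 0 ≤ a t := fun t => sqnormPt_nonneg _
  have hb_nonneg : ∀ t, 0 ≤ b t := fun t => sqnormPt_nonneg _
  have ha1 : a 1 = 0 := by simp [ha, hzh1, sqnormPt_zero]
  -- the key one-step inequality
  have hkey : ∀ t, 1 ≤ t → ∀ w ∈ Z,
      η * dotPt (z t - w) (Fop G (z t)) + Dbreg ψ w (zh (t + 1)) + (1/8) * a (t + 1)
        + (5/16) * (a (t + 1) + b t) ≤ Dbreg ψ w (zh t) + (1/8) * a t := by
    intro t ht w hw
    have hqmem : zh (t + 1) ∈ Z := (hzh t ht).1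
    have hpmem : z t ∈ Z := hzmem t ht
    have hvmem : zh t ∈ Z := hzhmem t ht
    have h1 := hfoc1 t ht (zh (t + 1)) hqmem
    have h2 := hfoc2 t ht w hw
    -- decomposition of the main term
    have hid : η * dotPt (z t - w) (Fop G (z t))
        = η * dotPt (z t - zh (t + 1)) (Fop G (z (t - 1)))
        + η * dotPt (zh (t + 1) - w) (Fop G (z t))
        + η * dotPt (z t - zh (t + 1)) (Fop G (z t - z (t - 1))) := by
      rw [Fop_sub]
      simp only [dotPt_sub_left, dotPt_sub_right]
      ring
    -- bound on the error term
    have habs := abs_dotPt_Fop_le G hG (z t - zh (t + 1)) (z t - z (t - 1))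
    have hAB : 0 ≤ sqnormPt (z t - zh (t + 1)) + sqnormPt (z t - z (t - 1)) := by
      have := sqnormPt_nonneg (z t - zh (t + 1))
      have := sqnormPt_nonneg (z t - z (t - 1))
      linarith
    have herr : η * dotPt (z t - zh (t + 1)) (Fop G (z t - z (t - 1)))
        ≤ (1/16) * (sqnormPt (z t - zh (t + 1)) + sqnormPt (z t - z (t - 1))) := by
      have h5 : η * dotPt (z t - zh (t + 1)) (Fop G (z t - z (t - 1)))
          ≤ η * ((((M : ℝ) + N) / 2)
            * (sqnormPt (z t - zh (t + 1)) + sqnormPt (z t - z (t - 1)))) :=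
        mul_le_mul_of_nonneg_left ((le_abs_self _).trans habs) hη.le
      have h6 := mul_le_mul_of_nonneg_right hηK hAB
      nlinarith
    -- triangle-type bound
    have htri : sqnormPt (z t - z (t - 1)) ≤ 2 * b t + 2 * a t := by
      have he : z t - z (t - 1) = (z t - zh t) + (zh t - z (t - 1)) := by abel
      rw [he]
      exact sqnormPt_add_le _ _
    -- strong convexity bounds
    have hD1 : (1/2) * sqnormPt (zh (t + 1) - z t) ≤ Dbreg ψ (zh (t + 1)) (z t) :=
      hsc _ hqmem _ hpmem
    have hD2 : (1/2) * b t ≤ Dbreg ψ (z t) (zh t) := hsc _ hpmem _ hvmem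
    have hacomm : a (t + 1) = sqnormPt (z t - zh (t + 1)) := by
      rw [ha]
      simp only [Nat.add_sub_cancel]
      exact sqnormPt_sub_comm _ _
    have hacomm2 : sqnormPt (zh (t + 1) - z t) = a (t + 1) := by
      rw [hacomm]; exact sqnormPt_sub_comm _ _
    rw [hid]
    rw [hacomm2] at hD1
    rw [← hacomm] at herr
    have hbt := hb_nonneg t
    have hat := ha_nonneg t
    have hat1 := ha_nonneg (t + 1)
    linarith
  -- telescoping sum
  have hsum : ∀ (T : ℕ), ∀ w ∈ Z,
      ∑ t ∈ Finset.Icc 1 T,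
          (η * dotPt (z t - w) (Fop G (z t)) + (5/16) * (a (t + 1) + b t))
        + (Dbreg ψ w (zh (T + 1)) + (1/8) * a (T + 1))
        ≤ Dbreg ψ w (z 0) := by
    intro T w hw
    induction T with
    | zero =>
      rw [Finset.Icc_eq_empty (by omega), Finset.sum_empty, hzh1, ha1]
      simp
    | succ T ih =>
      rw [Finset.sum_Icc_succ_top (by omega : (1:ℕ) ≤ T + 1)]
      have hk := hkey (T + 1) (by omega) w hw
      linarith
  -- maximum of the Bregman divergence from z 0 over the compact Z
  have hψcont : ContinuousOn ψ Z := fun v hv => (hdiff v hv).continuousAt.continuousWithinAt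
  have hDcont : ContinuousOn (fun w => Dbreg ψ w (z 0)) Z := by
    unfold Dbreg
    exact (hψcont.sub continuousOn_const).sub
      (((fderiv ℝ ψ (z 0)).continuous.comp (continuous_id.sub continuous_const)).continuousOn)
  obtain ⟨wmax, hwmaxZ, hwmax⟩ := hZcomp.exists_isMaxOn hZne hDcont
  set C : ℝ := Dbreg ψ wmax (z 0) with hCdef
  have hCmax : ∀ w ∈ Z, Dbreg ψ w (z 0) ≤ C := fun w hw => hwmax hw
  have hCnn : 0 ≤ C := by
    have h1 := hCmax (z 0) hz0
    rw [Dbreg_self] at h1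
    exact h1
  -- partial sums of dissipation are bounded (choosing w to be the average iterate)
  have hpartial : ∀ T : ℕ, ∑ t ∈ Finset.Icc 1 T, (a (t + 1) + b t) ≤ (16/5) * C := by
    intro T
    rcases Nat.eq_zero_or_pos T with rfl | hT
    · rw [Finset.Icc_eq_empty (by omega), Finset.sum_empty]
      linarith
    · set zb : Pt M N := (T:ℝ)⁻¹ • (∑ t ∈ Finset.Icc 1 T, z t) with hzb
      have hTpos : (0:ℝ) < T := Nat.cast_pos.mpr hT
      have hzbZ : zb ∈ Z := by
        rw [hzb, Finset.smul_sum]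
        apply hZconv.sum_mem
        · intro i _
          positivity
        · rw [Finset.sum_const, Nat.card_Icc]
          simp only [Nat.add_sub_cancel, nsmul_eq_mul]
          exact mul_inv_cancel₀ (ne_of_gt hTpos)
        · intro i hi
          exact hzmem i (Finset.mem_Icc.mp hi).1
      have hzero : ∑ t ∈ Finset.Icc 1 T, dotPt (z t - zb) (Fop G (z t)) = 0 := by
        have hterm : ∀ t ∈ Finset.Icc 1 T, dotPt (z t - zb) (Fop G (z t))
            = dotPt (z t) (Fop G zb) := by
          intro t _
          rw [dotPt_sub_left, dotPt_Fop_self, dotPt_Fop_skew G zb (z t)]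
          ring
        rw [Finset.sum_congr rfl hterm, ← dotPt_sum_left, dotPt_Fop_skew G _ zb,
          hzb, dotPt_smul_left, dotPt_Fop_self]
        ring
      have hs := hsum T zb hzbZ
      have hsplit : ∑ t ∈ Finset.Icc 1 T,
            (η * dotPt (z t - zb) (Fop G (z t)) + (5/16) * (a (t + 1) + b t))
          = η * (∑ t ∈ Finset.Icc 1 T, dotPt (z t - zb) (Fop G (z t)))
            + (5/16) * ∑ t ∈ Finset.Icc 1 T, (a (t + 1) + b t) := by
        rw [Finset.sum_add_distrib, ← Finset.mul_sum, ← Finset.mul_sum]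
      rw [hsplit, hzero] at hs
      have hd1 := hD_nonneg zb hzbZ (zh (T + 1)) (hzhmem (T + 1) (by omega))
      have hd2 := ha_nonneg (T + 1)
      have hd3 := hCmax zb hzbZ
      linarith
  -- the dissipation terms tend to zero
  set c : ℕ → ℝ := fun k => a (k + 2) + b (k + 1) with hcdef
  have hcr : ∀ K, ∑ k ∈ Finset.range K, c k = ∑ t ∈ Finset.Icc 1 K, (a (t + 1) + b t) := by
    intro K
    induction K with
    | zero => simp
    | succ K ih =>
      rw [Finset.sum_range_succ, Finset.sum_Icc_succ_top (by omega : (1:ℕ) ≤ K + 1), ih]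
  have hcsummable : Summable c := by
    apply summable_of_sum_range_le (c := (16/5) * C)
    · intro k
      have h1 := ha_nonneg (k + 2)
      have h2 := hb_nonneg (k + 1)
      simp only [hcdef]
      linarith
    · intro K
      rw [hcr]
      exact hpartial K
  have hc0 : Tendsto c atTop (𝓝 0) := hcsummable.tendsto_atTop_zero
  have ha0 : Tendsto a atTop (𝓝 0) := by
    rw [← tendsto_add_atTop_iff_nat 2]
    refine squeeze_zero (fun k => ha_nonneg _) (fun k => ?_) hc0
    have h2 := hb_nonneg (k + 1)
    simp only [hcdef]
    linarith
  have hb0 : Tendsto b atTop (𝓝 0) := by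
    rw [← tendsto_add_atTop_iff_nat 1]
    refine squeeze_zero (fun k => hb_nonneg _) (fun k => ?_) hc0
    have h1 := ha_nonneg (k + 2)
    simp only [hcdef]
    linarith
  -- a cluster point of the hat iterates
  obtain ⟨zs, hzsZ, φ, hφmono, hφtend⟩ := hZcomp.tendsto_subseq
    (fun k : ℕ => hzhmem (k + 1) (by omega))
  have hφtop : Tendsto φ atTop atTop := hφmono.tendsto_atTop
  have htk : Tendsto (fun k => φ k + 1) atTop atTop :=
    (tendsto_add_atTop_nat 1).comp hφtop
  have h1 : Tendsto (fun k => zh (φ k + 1)) atTop (𝓝 zs) := hφtend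
  have hdz0 : Tendsto (fun t => z t - zh t) atTop (𝓝 0) := by
    apply tendsto_of_sqnormPt
    simpa [hb, sub_zero] using hb0
  have hdzh0 : Tendsto (fun t => zh t - z (t - 1)) atTop (𝓝 0) := by
    apply tendsto_of_sqnormPt
    simpa [ha, sub_zero] using ha0
  have h2 : Tendsto (fun k => z (φ k + 1)) atTop (𝓝 zs) := by
    have h := (hdz0.comp htk).add h1
    simpa using h
  have h3 : Tendsto (fun k => z (φ k)) atTop (𝓝 zs) := by
    have h := h1.sub (hdzh0.comp htk)
    simpa using h
  -- limit of the optimality conditions at the cluster point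
  have hφk1 : ∀ k, 1 ≤ φ k + 1 := fun k => by omega
  have hLtend : Tendsto (fun k => fderiv ℝ ψ (zh (φ k + 1))) atTop (𝓝 (fderiv ℝ ψ zs)) := by
    have hwithin : Tendsto (fun k => zh (φ k + 1)) atTop (𝓝[Z] zs) :=
      tendsto_nhdsWithin_iff.mpr ⟨h1, Filter.Eventually.of_forall fun k => hzhmem _ (hφk1 k)⟩
    exact (hcont zs hzsZ).tendsto.comp hwithin
  have hψzs := (hdiff zs hzsZ).continuousAt
  have hlimmin : ∀ w ∈ Z,
      η * dotPt zs (Fop G zs) + ψ zs - (fderiv ℝ ψ zs) zs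
        ≤ η * dotPt w (Fop G zs) + ψ w - (fderiv ℝ ψ zs) w := by
    intro w hw
    have hineq : ∀ k : ℕ,
        η * dotPt (z (φ k + 1)) (Fop G (z (φ k + 1 - 1))) + ψ (z (φ k + 1))
            - (fderiv ℝ ψ (zh (φ k + 1))) (z (φ k + 1))
          ≤ η * dotPt w (Fop G (z (φ k + 1 - 1))) + ψ w
            - (fderiv ℝ ψ (zh (φ k + 1))) w :=
      fun k => min_normalize ((hz (φ k + 1) (hφk1 k)).2 w hw)
    have h3' : Tendsto (fun k => z (φ k + 1 - 1)) atTop (𝓝 zs) := by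
      simpa [Nat.add_sub_cancel] using h3
    have hFtend : Tendsto (fun k => Fop G (z (φ k + 1 - 1))) atTop (𝓝 (Fop G zs)) :=
      ((continuous_Fop G).tendsto zs).comp h3'
    have hdot1 : Tendsto (fun k => dotPt (z (φ k + 1)) (Fop G (z (φ k + 1 - 1)))) atTop
        (𝓝 (dotPt zs (Fop G zs))) := tendsto_dotPt h2 hFtend
    have hdot2 : Tendsto (fun k => dotPt w (Fop G (z (φ k + 1 - 1)))) atTop
        (𝓝 (dotPt w (Fop G zs))) := tendsto_dotPt tendsto_const_nhds hFtend
    have hψ1 : Tendsto (fun k => ψ (z (φ k + 1))) atTop (𝓝 (ψ zs)) := hψzs.tendsto.comp h2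
    have hL1 : Tendsto (fun k => (fderiv ℝ ψ (zh (φ k + 1))) (z (φ k + 1))) atTop
        (𝓝 ((fderiv ℝ ψ zs) zs)) := tendsto_clm_apply' hLtend h2
    have hL2 : Tendsto (fun k => (fderiv ℝ ψ (zh (φ k + 1))) w) atTop
        (𝓝 ((fderiv ℝ ψ zs) w)) := tendsto_clm_apply' hLtend tendsto_const_nhds
    have hT1 := ((tendsto_const_nhds (x := η)).mul hdot1).add hψ1 |>.sub hL1
    have hT2 := ((tendsto_const_nhds (x := η)).mul hdot2).add (tendsto_const_nhds (x := ψ w))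
      |>.sub hL2
    exact le_of_tendsto_of_tendsto' hT1 hT2 hineq
  -- the cluster point solves the variational inequality
  have hVI : ∀ w ∈ Z, 0 ≤ dotPt (w - zs) (Fop G zs) := by
    intro w hw
    have h := foc_of_min hZconv hzsZ (hdiff zs hzsZ) (Fop G zs) η (fderiv ℝ ψ zs) hlimmin hw
    have h2' : 0 ≤ η * dotPt (w - zs) (Fop G zs) := by linarith
    by_contra hneg
    push_neg at hneg
    nlinarith
  -- zs is a Nash equilibrium
  have hzs1X : zs.1 ∈ X := (Set.mem_prod.mp hzsZ).1
  have hzs2Y : zs.2 ∈ Y := (Set.mem_prod.mp hzsZ).2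
  have hineqN : ∀ x' ∈ X, ∀ y' ∈ Y,
      dotp zs.1 (G.mulVec y') ≤ dotp x' (G.mulVec zs.2) := by
    intro x' hx' y' hy'
    have hw : ((x', y') : Pt M N) ∈ Z := Set.mem_prod.mpr ⟨hx', hy'⟩
    have h := hVI (x', y') hw
    rw [dotPt_sub_left, dotPt_Fop_self] at h
    have he : dotPt ((x', y') : Pt M N) (Fop G zs)
        = dotp x' (G.mulVec zs.2) - dotp zs.1 (G.mulVec y') := by
      simp only [dotPt, Fop]
      rw [dotp_neg_right, dotp_mulVec_transpose]
      ring
    rw [he] at h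
    linarith
  have hNash : zs ∈ NashSet G X Y := by
    constructor
    · refine ⟨hzs1X, fun x' hx' => ?_⟩
      have hub : maxPayoff G Y zs.1 ≤ dotp x' (G.mulVec zs.2) := by
        apply csSup_le (hYne.image _)
        rintro v ⟨y', hy', rfl⟩
        exact hineqN x' hx' y' hy'
      have hlb : dotp x' (G.mulVec zs.2) ≤ maxPayoff G Y x' := by
        apply le_csSup
        · exact (hYcomp.image (continuous_dotp_mulVec G x')).bddAbove
        · exact ⟨zs.2, hzs2Y, rfl⟩
      exact hub.trans hlb
    · refine ⟨hzs2Y, fun y' hy' => ?_⟩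
      have hub : minPayoff G X y' ≤ dotp zs.1 (G.mulVec y') := by
        apply csInf_le
        · exact (hXcomp.image (continuous_dotp_left (G.mulVec y'))).bddBelow
        · exact ⟨zs.1, hzs1X, rfl⟩
      have hlb : dotp zs.1 (G.mulVec y') ≤ minPayoff G X zs.2 := by
        apply le_csInf (hXne.image _)
        rintro v ⟨x', hx', rfl⟩
        exact hineqN x' hx' y' hy'
      exact hub.trans hlb
  -- monotonicity along the iterates
  have hmono : ∀ t, 1 ≤ t → 0 ≤ dotPt (z t - zs) (Fop G (z t)) := by
    intro t ht
    have h := hVI (z t) (hzmem t ht)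
    have he : dotPt (z t - zs) (Fop G (z t))
        = dotPt (z t - zs) (Fop G zs) + dotPt (z t - zs) (Fop G (z t - zs)) := by
      rw [← dotPt_add_right, ← Fop_add]
      have hzz : zs + (z t - zs) = z t := by abel
      rw [hzz]
    rw [he, dotPt_Fop_self]
    linarith
  -- the Lyapunov sequence
  set S : ℕ → ℝ := fun n => Dbreg ψ zs (zh (n + 1)) + (1/8) * a (n + 1) with hSdef
  have hSanti : ∀ n, S (n + 1) ≤ S n := by
    intro n
    have hk := hkey (n + 1) (by omega) zs hzsZ
    have hm := hmono (n + 1) (by omega)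
    have h5a := ha_nonneg (n + 1 + 1)
    have h5b := hb_nonneg (n + 1)
    have hd : 0 ≤ η * dotPt (z (n + 1) - zs) (Fop G (z (n + 1))) := mul_nonneg hη.le hm
    simp only [hSdef]
    linarith
  have hSnn : ∀ n, 0 ≤ S n := by
    intro n
    have hd1 := hD_nonneg zs hzsZ (zh (n + 1)) (hzhmem (n + 1) (by omega))
    have hd2 := ha_nonneg (n + 1)
    simp only [hSdef]
    linarith
  have hSmono : Antitone S := antitone_nat_of_succ_le hSanti
  have hSbdd : BddBelow (Set.range S) := ⟨0, by rintro v ⟨n, rfl⟩; exact hSnn n⟩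
  have hSlim : Tendsto S atTop (𝓝 (⨅ n, S n)) := tendsto_atTop_ciInf hSmono hSbdd
  -- along the subsequence, S tends to 0
  have hDtend : Tendsto (fun k => Dbreg ψ zs (zh (φ k + 1))) atTop (𝓝 0) := by
    have e1 : Tendsto (fun k => ψ (zh (φ k + 1))) atTop (𝓝 (ψ zs)) := hψzs.tendsto.comp h1
    have e2 : Tendsto (fun k => (fderiv ℝ ψ (zh (φ k + 1))) (zs - zh (φ k + 1))) atTop
        (𝓝 ((fderiv ℝ ψ zs) 0)) :=
      tendsto_clm_apply' hLtend (by simpa using (tendsto_const_nhds (x := zs)).sub h1)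
    have h0 := ((tendsto_const_nhds (x := ψ zs)).sub e1).sub e2
    simp only [Dbreg]
    simpa using h0
  have hS0 : Tendsto (fun k => S (φ k)) atTop (𝓝 0) := by
    have e3 : Tendsto (fun k => a (φ k + 1)) atTop (𝓝 0) :=
      ha0.comp ((tendsto_add_atTop_nat 1).comp hφtop)
    have h0 := hDtend.add ((tendsto_const_nhds (x := (1/8 : ℝ))).mul e3)
    simp only [hSdef]
    simpa using h0
  have hinf0 : (⨅ n, S n) = 0 :=
    tendsto_nhds_unique (hSlim.comp hφtop) hS0
  rw [hinf0] at hSlim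
  -- convergence of the iterates
  have hzh_tend : Tendsto zh atTop (𝓝 zs) := by
    rw [← tendsto_add_atTop_iff_nat 1]
    apply tendsto_of_sqnormPt
    have hband : ∀ n : ℕ, sqnormPt (zh (n + 1) - zs) ≤ 2 * S n := by
      intro n
      have h := hsc zs hzsZ (zh (n + 1)) (hzhmem (n + 1) (by omega))
      have h2 := ha_nonneg (n + 1)
      rw [sqnormPt_sub_comm]
      simp only [hSdef]
      linarith
    refine squeeze_zero (fun n => sqnormPt_nonneg _) hband ?_
    have h0 := (tendsto_const_nhds (x := (2:ℝ))).mul hSlim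
    simpa using h0
  have hz_tend : Tendsto z atTop (𝓝 zs) := by
    have h0 := hdz0.add hzh_tend
    simpa using h0
  exact ⟨zs, hNash, hz_tend⟩
end
end

section
/- For all real numbers u ∈ [0,1] and v ∈ (0,1], the following inequalities hold: (u − v)²/2 ≤ u ln(u/v) − u + v ≤ (u − v)²/v, where for u = 0 the expression u ln(u/v) is interpreted as 0. -/
open Real Set

lemma aux_L1 (x : ℝ) (hx0 : 0 < x) (hx1 : x ≤ 1) :
    (x - x⁻¹) / 2 ≤ Real.log x := by
  set f : ℝ → ℝ := fun x => Real.log x - (x - x⁻¹) / 2 with hf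
  have key : AntitoneOn f (Set.Ioc 0 1) := by
    apply antitoneOn_of_deriv_nonpos (convex_Ioc 0 1)
    · apply ContinuousOn.sub
      · exact Real.continuousOn_log.mono (fun y hy => ne_of_gt hy.1)
      · exact (continuousOn_id.sub (continuousOn_inv₀.mono (fun y hy => ne_of_gt hy.1))).div_const 2
    · intro y hy
      rw [interior_Ioc] at hy
      have hy0 : y ≠ 0 := ne_of_gt hy.1
      exact (((Real.differentiableAt_log hy0).sub
        ((differentiableAt_id.sub (differentiableAt_inv hy0)).div_const 2)).differentiableWithinAt)
    · intro y hy
      rw [interior_Ioc] at hy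
      have hy0 : y ≠ 0 := ne_of_gt hy.1
      have hd : HasDerivAt f (y⁻¹ - (1 - -(y ^ 2)⁻¹) / 2) y := by
        exact ((Real.hasDerivAt_log hy0).sub
          (((hasDerivAt_id y).sub (hasDerivAt_inv hy0)).div_const 2))
      rw [hd.deriv]
      have h1 : 0 < y := hy.1
      have h2 : y⁻¹ - (1 - -(y ^ 2)⁻¹) / 2 = -(y - 1) ^ 2 / (2 * y ^ 2) := by
        field_simp
        ring
      rw [h2]
      apply div_nonpos_of_nonpos_of_nonneg
      · nlinarith [sq_nonneg (y - 1)]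
      · positivity
  have h1 : f x ≥ f 1 := key ⟨hx0, hx1⟩ ⟨one_pos, le_refl 1⟩ hx1
  simp [hf, Real.log_one] at h1
  linarith [h1]

lemma aux_L2 (x : ℝ) (hx0 : 0 < x) (hx1 : x ≤ 1) :
    Real.log x ≤ (x - 1) - (x - 1) ^ 2 / 2 := by
  set f : ℝ → ℝ := fun x => (x - 1) - (x - 1) ^ 2 / 2 - Real.log x with hf
  have key : AntitoneOn f (Set.Ioc 0 1) := by
    apply antitoneOn_of_deriv_nonpos (convex_Ioc 0 1)
    · apply ContinuousOn.sub
      · fun_prop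
      · exact Real.continuousOn_log.mono (fun y hy => ne_of_gt hy.1)
    · intro y hy
      rw [interior_Ioc] at hy
      have hy0 : y ≠ 0 := ne_of_gt hy.1
      exact ((((differentiableAt_id.sub (differentiableAt_const 1)).sub
        (((differentiableAt_id.sub (differentiableAt_const 1)).pow 2).div_const 2)).sub
        (Real.differentiableAt_log hy0)).differentiableWithinAt)
    · intro y hy
      rw [interior_Ioc] at hy
      have hy0 : y ≠ 0 := ne_of_gt hy.1
      have hd : HasDerivAt f (1 - (2 * (y - 1)) / 2 - y⁻¹) y := by
        have h1 : HasDerivAt (fun z : ℝ => z - 1) 1 y := (hasDerivAt_id y).sub_const 1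
        have h2 : HasDerivAt (fun z : ℝ => (z - 1) ^ 2) (2 * (y - 1)) y := by
          have := h1.pow 2
          simp at this
          exact this
        exact (h1.sub (h2.div_const 2)).sub (Real.hasDerivAt_log hy0)
      rw [hd.deriv]
      have h1 : 0 < y := hy.1
      have h2 : 1 - (2 * (y - 1)) / 2 - y⁻¹ = -(y - 1) ^ 2 / y := by
        field_simp; ring
      rw [h2]
      apply div_nonpos_of_nonpos_of_nonneg
      · nlinarith [sq_nonneg (y - 1)]
      · linarith
  have h1 : f x ≥ f 1 := key ⟨hx0, hx1⟩ ⟨one_pos, le_refl 1⟩ hx1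
  simp [hf, Real.log_one] at h1
  linarith [h1]

/-- Lemma 10: for `u ∈ [0,1]` and `v ∈ (0,1]`,
`(u − v)²/2 ≤ u ln(u/v) − u + v ≤ (u − v)²/v` (with `0 · ln(0/v) = 0`;
note `Real.log 0 = 0` in Mathlib, so `u * Real.log (u / v)` realizes this
convention automatically). -/
theorem entropy_one_dim_bounds (u v : ℝ) (hu0 : 0 ≤ u) (hu1 : u ≤ 1)
    (hv0 : 0 < v) (hv1 : v ≤ 1) :
    (u - v) ^ 2 / 2 ≤ u * Real.log (u / v) - u + v ∧
    u * Real.log (u / v) - u + v ≤ (u - v) ^ 2 / v := by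
  rcases eq_or_lt_of_le hu0 with h | hu0'
  · have h0 : u = 0 := h.symm
    subst h0
    have hsq : (0 - v) ^ 2 / v = v := by field_simp; ring
    constructor
    · simp only [zero_mul, zero_sub, zero_add]
      nlinarith
    · simp only [zero_mul, zero_sub, zero_add]
      rw [show ((-v) ^ 2 : ℝ) = (0 - v) ^ 2 by ring, hsq]
      linarith
  constructor
  · -- lower bound, u > 0
    rcases le_or_gt u v with huv | huv
    · -- u ≤ v : use L1 on u/v
      have ht0 : 0 < u / v := div_pos hu0' hv0
      have ht1 : u / v ≤ 1 := (div_le_one hv0).mpr huv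
      have := aux_L1 (u / v) ht0 ht1
      have hlog : (u / v - (u / v)⁻¹) / 2 ≤ Real.log (u / v) := this
      have hinv : (u / v)⁻¹ = v / u := by
        rw [inv_div]
      rw [hinv] at hlog
      have h2 : u * ((u / v - v / u) / 2) ≤ u * Real.log (u / v) :=
        mul_le_mul_of_nonneg_left hlog hu0
      have h3 : u * ((u / v - v / u) / 2) = (u ^ 2 - v ^ 2) / (2 * v) := by
        field_simp
      rw [h3] at h2
      have h6 : (u ^ 2 - v ^ 2) / (2 * v) - u + v - (u - v) ^ 2 / 2
          = (1 - v) * (u - v) ^ 2 / (2 * v) := by field_simp; ring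
      have h7 : 0 ≤ (1 - v) * (u - v) ^ 2 / (2 * v) := by
        apply div_nonneg _ (by linarith)
        exact mul_nonneg (by linarith) (sq_nonneg _)
      linarith
    · -- v < u : use L2 on v/u
      have hs0 : 0 < v / u := div_pos hv0 hu0'
      have hs1 : v / u ≤ 1 := (div_le_one hu0').mpr (le_of_lt huv)
      have hL := aux_L2 (v / u) hs0 hs1
      have hlog : Real.log (u / v) = -Real.log (v / u) := by
        rw [← Real.log_inv, inv_div]
      rw [hlog]
      have h2 : -Real.log (v / u) ≥ -((v / u - 1) - (v / u - 1) ^ 2 / 2) := by linarith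
      have h3 : u * (-((v / u - 1) - (v / u - 1) ^ 2 / 2)) ≤ u * (-Real.log (v / u)) :=
        mul_le_mul_of_nonneg_left h2 hu0
      have h4 : u * (-((v / u - 1) - (v / u - 1) ^ 2 / 2)) = (u - v) + (u - v) ^ 2 / (2 * u) := by
        field_simp
        ring
      rw [h4] at h3
      have h5 : (u - v) ^ 2 / 2 ≤ (u - v) ^ 2 / (2 * u) := by
        apply div_le_div_of_nonneg_left (sq_nonneg _) (by linarith)
        linarith
      linarith
  · -- upper bound
    have ht0 : 0 < u / v := div_pos hu0' hv0
    have hlog : Real.log (u / v) ≤ u / v - 1 := Real.log_le_sub_one_of_pos ht0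
    have h2 : u * Real.log (u / v) ≤ u * (u / v - 1) := mul_le_mul_of_nonneg_left hlog hu0
    have h3 : u * (u / v - 1) = u * (u - v) / v := by field_simp
    rw [h3] at h2
    have h6 : u * (u - v) / v - u + v = (u - v) ^ 2 / v := by field_simp; ring
    linarith
end

section
/- (Strong convexity of the vanilla entropy with respect to the 2-norm.) For any vectors z ∈ [0,1]^P and z' ∈ (0,1]^P, the generalized KL divergence satisfies Σ_{i=1}^P (z_i ln(z_i/z'_i) − z_i + z'_i) ≥ (1/2) Σ_{i=1}^P (z_i − z'_i)², where terms with z_i = 0 are interpreted with 0 ln 0 := 0. In particular, the vanilla entropy regularizer Ψ^van(z) = Σ_i z_i ln z_i is 1-strongly convex with respect to the 2-norm on any treeplex. -/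
open Finset

private lemma phi_deriv {x : ℝ} (hx : 0 < x) :
    HasDerivAt (fun y : ℝ => y * Real.log y - y + 1 - (y - 1) ^ 2 / 2)
      (Real.log x - x + 1) x := by
  have h1 : HasDerivAt (fun y : ℝ => y * Real.log y) (Real.log x + 1) x :=
    Real.hasDerivAt_mul_log hx.ne'
  have h2 : HasDerivAt (fun y : ℝ => (y - 1) ^ 2 / 2) ((x - 1)) x := by
    have : HasDerivAt (fun y : ℝ => (y - 1) ^ 2) (2 * (x - 1) ^ 1 * 1) x := by
      exact (((hasDerivAt_id x).sub_const 1).pow 2)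
    simpa using this.div_const 2
  have := ((h1.sub (hasDerivAt_id x)).add_const 1).sub h2
  refine this.congr_deriv ?_
  ring

private lemma phi_nonneg {x : ℝ} (hx : 0 < x) (hx1 : x ≤ 1) :
    (x - 1) ^ 2 / 2 ≤ x * Real.log x - x + 1 := by
  set f := fun y : ℝ => y * Real.log y - y + 1 - (y - 1) ^ 2 / 2 with hf
  have hanti : AntitoneOn f (Set.Ioi (0 : ℝ)) := by
    apply antitoneOn_of_deriv_nonpos (convex_Ioi 0)
    · exact fun y hy => ((phi_deriv hy).continuousAt).continuousWithinAt
    · intro y hy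
      rw [interior_Ioi] at hy
      exact (phi_deriv hy).differentiableAt.differentiableWithinAt
    · intro y hy
      rw [interior_Ioi] at hy
      rw [(phi_deriv hy).deriv]
      nlinarith [Real.log_le_sub_one_of_pos hy]
  have h01 := hanti (Set.mem_Ioi.2 hx) (Set.mem_Ioi.2 one_pos) hx1
  simp only [hf, Real.log_one] at h01
  nlinarith [h01]

private lemma psi_deriv {x : ℝ} (hx : 0 < x) :
    HasDerivAt (fun y : ℝ => y * Real.log y - (3/2) * y + 2 - 1 / (2 * y))
      (Real.log x - 1/2 + 1 / (2 * x ^ 2)) x := by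
  have h1 : HasDerivAt (fun y : ℝ => y * Real.log y) (Real.log x + 1) x :=
    Real.hasDerivAt_mul_log hx.ne'
  have h2 : HasDerivAt (fun y : ℝ => 1 / (2 * y)) (-(2) / (2 * x) ^ 2) x := by
    have : HasDerivAt (fun y : ℝ => 2 * y) 2 x := by
      simpa using (hasDerivAt_id x).const_mul (2:ℝ)
    exact ((hasDerivAt_const x (1:ℝ)).div this (by positivity)).congr_deriv (by ring)
  have h3 : HasDerivAt (fun y : ℝ => (3/2 : ℝ) * y) (3/2) x := by
    simpa using (hasDerivAt_id x).const_mul (3/2 : ℝ)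
  have := ((h1.sub h3).add_const 2).sub h2
  refine this.congr_deriv ?_
  field_simp
  ring

private lemma psi_nonneg {x : ℝ} (hx : 1 ≤ x) :
    (x - 1) ^ 2 / (2 * x) ≤ x * Real.log x - x + 1 := by
  have hx0 : (0:ℝ) < x := lt_of_lt_of_le one_pos hx
  set f := fun y : ℝ => y * Real.log y - (3/2) * y + 2 - 1 / (2 * y) with hf
  have hmono : MonotoneOn f (Set.Ici (1 : ℝ)) := by
    apply monotoneOn_of_deriv_nonneg (convex_Ici 1)
    · intro y hy
      have hy0 : (0:ℝ) < y := lt_of_lt_of_le one_pos hy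
      exact ((psi_deriv hy0).continuousAt).continuousWithinAt
    · intro y hy
      rw [interior_Ici] at hy
      have hy0 : (0:ℝ) < y := lt_trans one_pos hy
      exact (psi_deriv hy0).differentiableAt.differentiableWithinAt
    · intro y hy
      rw [interior_Ici] at hy
      have hy0 : (0:ℝ) < y := lt_trans one_pos hy
      rw [(psi_deriv hy0).deriv]
      have hlog : 1 - y⁻¹ ≤ Real.log y := Real.one_sub_inv_le_log_of_pos hy0
      have h1 : y⁻¹ = 1 / y := (one_div y).symm
      have h2 : (0:ℝ) < y ^ 2 := by positivity
      rw [h1] at hlog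
      have key : (0:ℝ) ≤ (y - 1) ^ 2 := sq_nonneg _
      have heq : 1 - 1/y - 1/2 + 1/(2*y^2) = (y-1)^2 / (2*y^2) := by
        field_simp; ring
      have hq : (0:ℝ) ≤ (y-1)^2 / (2*y^2) := by positivity
      linarith
    
  have h01 := hmono (Set.mem_Ici.2 le_rfl) (Set.mem_Ici.2 hx) hx
  simp only [hf, Real.log_one] at h01
  have hf1 : (1:ℝ) * 0 - 3/2 * 1 + 2 - 1/(2*1) = 0 := by norm_num
  have hform : (x - 1) ^ 2 / (2 * x) = (3/2)*x - 2 + 1/(2*x) + (-x + 1) + 0 := by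
    field_simp; ring
  nlinarith [h01]

private lemma pointwise (a b : ℝ) (ha0 : 0 ≤ a) (ha1 : a ≤ 1) (hb0 : 0 < b) (hb1 : b ≤ 1) :
    (a - b) ^ 2 / 2 ≤ a * Real.log (a / b) - a + b := by
  rcases eq_or_lt_of_le ha0 with h0 | ha0'
  · simp only [← h0, zero_div, Real.log_zero, mul_zero, zero_sub, neg_add_eq_sub]
    nlinarith
  · set t := a / b with ht
    have hb0' := hb0.ne'
    have ht0 : 0 < t := div_pos ha0' hb0
    have hab : a = b * t := by rw [ht]; field_simp
    rcases le_total a b with hle | hle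
    · have ht1 : t ≤ 1 := (div_le_one hb0).2 hle
      have key := phi_nonneg ht0 ht1
      have key' := mul_le_mul_of_nonneg_left key hb0.le
      have hbt2 : b * (t * Real.log t - t + 1) = a * Real.log t - a + b := by
        rw [hab]; ring
      have hsq : (a - b) ^ 2 = b ^ 2 * (t - 1) ^ 2 := by rw [hab]; ring
      have hx : 0 ≤ b * (t - 1) ^ 2 * (1 - b) :=
        mul_nonneg (mul_nonneg hb0.le (sq_nonneg _)) (by linarith)
      nlinarith [key', hbt2, hsq, hx]
    · have ht1 : 1 ≤ t := (one_le_div hb0).2 hle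
      have key := psi_nonneg ht1
      have key' := mul_le_mul_of_nonneg_left key hb0.le
      have hbt : b * ((t - 1)^2 / (2 * t)) = (a - b)^2 / (2 * a) := by
        rw [hab]; field_simp
      have hbt2 : b * (t * Real.log t - t + 1) = a * Real.log t - a + b := by
        rw [hab]; ring
      have hq : (a - b) ^ 2 / 2 ≤ (a - b) ^ 2 / (2 * a) := by
        rw [div_le_div_iff₀ (by norm_num) (by positivity)]
        nlinarith [sq_nonneg (a - b)]
      linarith

/-- Lemma 11: strong convexity of the vanilla entropy w.r.t. the
2-norm.  For `z ∈ [0,1]^P` and `z' ∈ (0,1]^P`, the generalized KL divergence (the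
Bregman divergence of `Ψ^van(z) = ∑ z_i ln z_i`, with `0 ln 0 = 0`) satisfies
`∑_i (z_i ln(z_i/z'_i) − z_i + z'_i) ≥ (1/2) ∑_i (z_i − z'_i)²`.  In particular
`Ψ^van` is 1-strongly convex w.r.t. the 2-norm on any treeplex. -/
theorem klgen_strongly_convex {P : ℕ} (z z' : Fin P → ℝ)
    (hz : ∀ i, 0 ≤ z i ∧ z i ≤ 1) (hz' : ∀ i, 0 < z' i ∧ z' i ≤ 1) :
    (1 / 2) * (∑ i, (z i - z' i) ^ 2) ≤
      ∑ i, (z i * Real.log (z i / z' i) - z i + z' i) := by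
  rw [Finset.mul_sum]
  apply Finset.sum_le_sum
  intro i _
  have h := pointwise (z i) (z' i) (hz i).1 (hz i).2 (hz' i).1 (hz' i).2
  linarith
end

section
/- (Reverse Pinsker-type bound for the vanilla entropy on a treeplex.) Let Z ⊆ ℝ^P be a treeplex, let z* ∈ Z, and let z ∈ Z have all coordinates strictly positive. Write S = supp(z*) (which is nonempty). Then the generalized KL divergence satisfies D_{Ψ^van}(z*, z) ≤ Σ_{i∈S} (z*_i − z_i)² / (min_{j∈S} z_j) + Σ_{i∉S} z_i ≤ 3P ‖z* − z‖₂ / (min_{j∈S} z_j). -/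
open Finset Filter Topology

noncomputable section

/-- Every point of a treeplex has coordinates in `[0,1]` and a positive coordinate. -/
lemma treeplex_bounds : ∀ {n : ℕ} {Z : Set (Fin n → ℝ)}, IsTreeplex Z →
    ∀ z ∈ Z, (∀ i, 0 ≤ z i ∧ z i ≤ 1) ∧ ∃ i, 0 < z i := by
  intro n Z h
  induction h with
  | simplex m =>
    rintro z ⟨hnn, hsum⟩
    refine ⟨fun i => ⟨hnn i, ?_⟩, ?_⟩
    · calc z i ≤ ∑ j, z j := Finset.single_le_sum (fun j _ => hnn j) (Finset.mem_univ i)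
        _ = 1 := hsum
    · by_contra hc
      push_neg at hc
      have : ∀ i, z i = 0 := fun i => le_antisymm (hc i) (hnn i)
      simp [this] at hsum
  | prod hS hT ihS ihT =>
    rintro w ⟨u, hu, v, hv, rfl⟩
    obtain ⟨hub, i0, hi0⟩ := ihS u hu
    obtain ⟨hvb, -⟩ := ihT v hv
    refine ⟨fun i => ?_, ⟨Fin.castAdd _ i0, by simpa [Fin.append_left] using hi0⟩⟩
    induction i using Fin.addCases with
    | left i => simpa [Fin.append_left] using hub i
    | right j => simpa [Fin.append_right] using hvb j
  | branch i hS hT ihS ihT =>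
    rintro w ⟨u, hu, v, hv, rfl⟩
    obtain ⟨hub, i0, hi0⟩ := ihS u hu
    obtain ⟨hvb, -⟩ := ihT v hv
    refine ⟨fun j => ?_, ⟨Fin.castAdd _ i0, by simpa [Fin.append_left] using hi0⟩⟩
    induction j using Fin.addCases with
    | left j => simpa [Fin.append_left] using hub j
    | right j =>
      simp only [Fin.append_right]
      exact ⟨mul_nonneg (hub i).1 (hvb j).1,
        mul_le_one₀ (hub i).2 (hvb j).1 (hvb j).2⟩

/-- Key scalar inequality: `x ln(x/y) − x + y ≤ (x − y)²/y` for `x ≥ 0`, `y > 0`. -/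
lemma kl_term_le {x y : ℝ} (hx : 0 ≤ x) (hy : 0 < y) :
    x * Real.log (x / y) - x + y ≤ (x - y) ^ 2 / y := by
  rcases eq_or_lt_of_le hx with h0 | hx'
  · rw [← h0]
    have h : (0 - y) ^ 2 / y = y := by field_simp; ring
    rw [h]; simp
  · have hdiv : 0 < x / y := div_pos hx' hy
    have hlog : Real.log (x / y) ≤ x / y - 1 := Real.log_le_sub_one_of_pos hdiv
    have h1 : x * Real.log (x / y) ≤ x * (x / y - 1) :=
      mul_le_mul_of_nonneg_left hlog hx
    have h2 : x * (x / y - 1) - x + y = (x - y) ^ 2 / y := by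
      field_simp; ring
    linarith

/-- Lemma 12: reverse-Pinsker-type bound for the vanilla entropy on
a treeplex.  For `z* ∈ Z` and `z ∈ Z` with all coordinates positive, the support
`S = supp(z*)` is nonempty and
`D_{Ψ^van}(z*, z) ≤ ∑_{i∈S}(z*_i − z_i)²/(min_{j∈S} z_j) + ∑_{i∉S} z_i
  ≤ 3P‖z* − z‖₂/(min_{j∈S} z_j)`. -/
theorem reverse_pinsker_vanilla_entropy {P : ℕ}
    (Z : Set (Fin P → ℝ)) (hZ : IsTreeplex Z)
    (zs : Fin P → ℝ) (hzs : zs ∈ Z)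
    (z : Fin P → ℝ) (hz : z ∈ Z) (hzpos : ∀ i, 0 < z i) :
    (Finset.univ.filter fun i => 0 < zs i).Nonempty ∧
    KLgen zs z ≤
      (∑ i ∈ Finset.univ.filter fun i => 0 < zs i, (zs i - z i) ^ 2) /
          sInf (z '' {j | 0 < zs j})
        + (∑ i ∈ Finset.univ.filter fun i => ¬ 0 < zs i, z i) ∧
    (∑ i ∈ Finset.univ.filter fun i => 0 < zs i, (zs i - z i) ^ 2) /
          sInf (z '' {j | 0 < zs j})
        + (∑ i ∈ Finset.univ.filter fun i => ¬ 0 < zs i, z i) ≤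
      3 * (P : ℝ) * norm2 (zs - z) / sInf (z '' {j | 0 < zs j}) := by
  obtain ⟨hzsb, i0, hi0⟩ := treeplex_bounds hZ zs hzs
  obtain ⟨hzb, -⟩ := treeplex_bounds hZ z hz
  set S : Finset (Fin P) := Finset.univ.filter (fun i => 0 < zs i) with hS
  have hSne : S.Nonempty := ⟨i0, by simp [hS, hi0]⟩
  set m : ℝ := sInf (z '' {j | 0 < zs j}) with hmdef
  have hsetne : ({j | 0 < zs j} : Set (Fin P)).Nonempty := ⟨i0, hi0⟩
  have himne : (z '' {j | 0 < zs j}).Nonempty := hsetne.image z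
  have himfin : (z '' {j | 0 < zs j}).Finite := (Set.toFinite _).image z
  have hmmem : m ∈ z '' {j | 0 < zs j} := himne.csInf_mem himfin
  obtain ⟨j0, hj0, hmj0⟩ := hmmem
  have hmpos : 0 < m := hmj0 ▸ hzpos j0
  have hmle1 : m ≤ 1 := hmj0 ▸ (hzb j0).2
  have hmle : ∀ j, 0 < zs j → m ≤ z j := fun j hj =>
    csInf_le himfin.bddBelow ⟨j, hj, rfl⟩
  have hN : 0 ≤ norm2 (zs - z) := Real.sqrt_nonneg _
  have habs : ∀ i, |zs i - z i| ≤ norm2 (zs - z) := by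
    intro i
    have h1 : (zs i - z i) ^ 2 ≤ sqnorm (zs - z) := by
      have := Finset.single_le_sum (f := fun i => ((zs - z) i) ^ 2)
        (fun j _ => sq_nonneg _) (Finset.mem_univ i)
      simpa [sqnorm] using this
    calc |zs i - z i| = Real.sqrt ((zs i - z i) ^ 2) := (Real.sqrt_sq_eq_abs _).symm
      _ ≤ norm2 (zs - z) := Real.sqrt_le_sqrt h1
  refine ⟨hSne, ?_, ?_⟩
  · -- KL bound
    have hsplit : KLgen zs z =
        (∑ i ∈ S, (zs i * Real.log (zs i / z i) - zs i + z i)) +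
        (∑ i ∈ Finset.univ.filter (fun i => ¬ 0 < zs i),
          (zs i * Real.log (zs i / z i) - zs i + z i)) := by
      rw [KLgen, ← Finset.sum_filter_add_sum_filter_not Finset.univ (fun i => 0 < zs i)]
    have hnot : ∀ i ∈ Finset.univ.filter (fun i => ¬ 0 < zs i),
        zs i * Real.log (zs i / z i) - zs i + z i = z i := by
      intro i hi
      simp only [Finset.mem_filter] at hi
      have : zs i = 0 := le_antisymm (not_lt.1 hi.2) (hzsb i).1
      simp [this]
    have h2 : (∑ i ∈ Finset.univ.filter (fun i => ¬ 0 < zs i),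
        (zs i * Real.log (zs i / z i) - zs i + z i)) =
        ∑ i ∈ Finset.univ.filter (fun i => ¬ 0 < zs i), z i :=
      Finset.sum_congr rfl hnot
    have h3 : (∑ i ∈ S, (zs i * Real.log (zs i / z i) - zs i + z i)) ≤
        (∑ i ∈ S, (zs i - z i) ^ 2) / m := by
      rw [Finset.sum_div]
      refine Finset.sum_le_sum fun i hi => ?_
      have hzsi : 0 < zs i := by simpa [hS] using hi
      calc zs i * Real.log (zs i / z i) - zs i + z i
          ≤ (zs i - z i) ^ 2 / z i := kl_term_le (hzsi.le) (hzpos i)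
        _ ≤ (zs i - z i) ^ 2 / m :=
            div_le_div_of_nonneg_left (sq_nonneg _) hmpos (hmle i hzsi)
    rw [hsplit, h2]
    exact add_le_add_left h3 _
  · -- second inequality
    have hA : (∑ i ∈ S, (zs i - z i) ^ 2) ≤ (P : ℝ) * norm2 (zs - z) := by
      have hterm : ∀ i ∈ S, (zs i - z i) ^ 2 ≤ norm2 (zs - z) := by
        intro i hi
        have hle1 : |zs i - z i| ≤ 1 := by
          rw [abs_le]
          constructor <;> [linarith [(hzsb i).1, (hzb i).2]; linarith [(hzsb i).2, (hzb i).1]]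
        calc (zs i - z i) ^ 2 = |zs i - z i| * |zs i - z i| := by
              rw [← sq_abs]; ring
          _ ≤ 1 * |zs i - z i| := mul_le_mul_of_nonneg_right hle1 (abs_nonneg _)
          _ = |zs i - z i| := one_mul _
          _ ≤ norm2 (zs - z) := habs i
      calc (∑ i ∈ S, (zs i - z i) ^ 2) ≤ S.card • norm2 (zs - z) :=
            Finset.sum_le_card_nsmul _ _ _ hterm
        _ = (S.card : ℝ) * norm2 (zs - z) := nsmul_eq_mul _ _
        _ ≤ (P : ℝ) * norm2 (zs - z) := by
            refine mul_le_mul_of_nonneg_right ?_ hN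
            exact_mod_cast (Finset.card_le_univ S).trans_eq (by simp)
    have hB : (∑ i ∈ Finset.univ.filter (fun i => ¬ 0 < zs i), z i) ≤
        (P : ℝ) * norm2 (zs - z) := by
      have hterm : ∀ i ∈ Finset.univ.filter (fun i => ¬ 0 < zs i),
          z i ≤ norm2 (zs - z) := by
        intro i hi
        simp only [Finset.mem_filter] at hi
        have hzsi : zs i = 0 := le_antisymm (not_lt.1 hi.2) (hzsb i).1
        calc z i = |zs i - z i| := by
              rw [hzsi]; rw [abs_of_nonpos (by linarith [(hzb i).1])]; ring
          _ ≤ norm2 (zs - z) := habs i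
      calc (∑ i ∈ Finset.univ.filter (fun i => ¬ 0 < zs i), z i)
          ≤ (Finset.univ.filter (fun i => ¬ 0 < zs i)).card • norm2 (zs - z) :=
            Finset.sum_le_card_nsmul _ _ _ hterm
        _ = ((Finset.univ.filter (fun i => ¬ 0 < zs i)).card : ℝ) * norm2 (zs - z) :=
            nsmul_eq_mul _ _
        _ ≤ (P : ℝ) * norm2 (zs - z) := by
            refine mul_le_mul_of_nonneg_right ?_ hN
            exact_mod_cast (Finset.card_le_univ _).trans_eq (by simp)
    have hPN : 0 ≤ (P : ℝ) * norm2 (zs - z) := mul_nonneg (Nat.cast_nonneg _) hN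
    have hAm : (∑ i ∈ S, (zs i - z i) ^ 2) / m ≤ (P : ℝ) * norm2 (zs - z) / m :=
      (div_le_div_iff_of_pos_right hmpos).mpr hA
    have hBm : (∑ i ∈ Finset.univ.filter (fun i => ¬ 0 < zs i), z i) ≤
        (P : ℝ) * norm2 (zs - z) / m := by
      refine hB.trans ?_
      rw [le_div_iff₀ hmpos]
      nlinarith
    have h3 : 3 * (P : ℝ) * norm2 (zs - z) / m =
        (P : ℝ) * norm2 (zs - z) / m + (P : ℝ) * norm2 (zs - z) / m +
        (P : ℝ) * norm2 (zs - z) / m := by ring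
    have hlast : 0 ≤ (P : ℝ) * norm2 (zs - z) / m := div_nonneg hPN hmpos.le
    rw [h3]
    linarith
end
end
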